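/- For every group Γ and every nonzero exact bounded cohomology class α ∈ EH^2_b(Γ) of degree 2, one has ‖α‖_bah = ∞. Equivalently: if α ∈ EH^2_b(Γ) satisfies ‖α‖_bah < ∞, then α = 0, i.e. every invariant 2-cochain representing α is the coboundary of a bounded invariant 1-cochain up to coboundary. -/

import Mathlib

set_option linter.unusedSectionVars false
set_option linter.unusedVariables false

open scoped ENNReal

namespace BddCoh

variable (G : Type*) [Group G]

/-- Homogeneous real `n`-cochains on `G`: functions `G^{n+1} → ℝ`. -/
abbrev Cochain (n : ℕ) : Type _ := (Fin (n + 1) → G) → ℝ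

variable {G}

/-- Invariance of a homogeneous cochain under the diagonal left translation action. -/
def IsInvariant {n : ℕ} (φ : Cochain G n) : Prop :=
  ∀ (g : G) (x : Fin (n + 1) → G), φ (fun i => g * x i) = φ x

/-- Boundedness of a cochain. -/
def IsBoundedC {n : ℕ} (φ : Cochain G n) : Prop :=
  ∃ C : ℝ, ∀ x, |φ x| ≤ C

/-- The sup-norm of a cochain, valued in `[0,∞]`. -/
noncomputable def snorm {n : ℕ} (φ : Cochain G n) : ℝ≥0∞ :=
  ⨆ x : Fin (n + 1) → G, ENNReal.ofReal |φ x|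

/-- The homogeneous differential. -/
noncomputable def delta {n : ℕ} : Cochain G n →ₗ[ℝ] Cochain G (n + 1) where
  toFun φ := fun x => ∑ i : Fin (n + 2), (-1 : ℝ) ^ (i : ℕ) * φ (fun j => x (i.succAbove j))
  map_add' φ ψ := by
    funext x
    simp [mul_add, Finset.sum_add_distrib]
  map_smul' c φ := by
    funext x
    simp only [Pi.smul_apply, smul_eq_mul, RingHom.id_apply]
    rw [Finset.mul_sum]
    exact Finset.sum_congr rfl fun i _ => by ring

lemma IsInvariant.add {n : ℕ} {φ ψ : Cochain G n} (h1 : IsInvariant φ) (h2 : IsInvariant ψ) :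
    IsInvariant (φ + ψ) := fun g x => by
  simp only [Pi.add_apply, h1 g x, h2 g x]

lemma IsInvariant.smul {n : ℕ} (c : ℝ) {φ : Cochain G n} (h : IsInvariant φ) :
    IsInvariant (c • φ) := fun g x => by
  simp only [Pi.smul_apply, h g x]

lemma IsInvariant.zero {n : ℕ} : IsInvariant (0 : Cochain G n) := fun _ _ => rfl

lemma IsBoundedC.add {n : ℕ} {φ ψ : Cochain G n} : IsBoundedC φ → IsBoundedC ψ →
    IsBoundedC (φ + ψ)
  | ⟨C, hC⟩, ⟨D, hD⟩ => ⟨C + D, fun x => (abs_add_le (φ x) (ψ x)).trans (add_le_add (hC x) (hD x))⟩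

lemma IsBoundedC.smul {n : ℕ} (c : ℝ) {φ : Cochain G n} : IsBoundedC φ → IsBoundedC (c • φ)
  | ⟨C, hC⟩ => ⟨|c| * C, fun x => by
      have h : |(c • φ) x| = |c| * |φ x| := by
        simp [abs_mul]
      rw [h]
      exact mul_le_mul_of_nonneg_left (hC x) (abs_nonneg c)⟩

lemma IsBoundedC.zero {n : ℕ} : IsBoundedC (0 : Cochain G n) := ⟨0, fun x => by simp⟩

variable (G)

/-- The bounded invariant cocycles in degree `n`. -/
noncomputable def Zb (n : ℕ) : Submodule ℝ (Cochain G n) where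
  carrier := {z | IsBoundedC z ∧ IsInvariant z ∧ delta z = 0}
  add_mem' := by
    rintro a b ⟨hba, hia, hda⟩ ⟨hbb, hib, hdb⟩
    exact ⟨hba.add hbb, hia.add hib, by rw [map_add, hda, hdb, add_zero]⟩
  zero_mem' := ⟨IsBoundedC.zero, IsInvariant.zero, map_zero _⟩
  smul_mem' := by
    rintro c a ⟨hb, hi, hd⟩
    exact ⟨hb.smul c, hi.smul c, by rw [map_smul, hd, smul_zero]⟩

variable {G}

/-- Being the coboundary of a bounded invariant cochain (with the convention `C^{-1} = 0`). -/
def IsCobdry : ∀ {n : ℕ}, Cochain G n → Prop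
  | 0, ψ => ψ = 0
  | n + 1, ψ => ∃ φ : Cochain G n, IsBoundedC φ ∧ IsInvariant φ ∧ delta φ = ψ

lemma IsCobdry.add : ∀ {n : ℕ} {a b : Cochain G n}, IsCobdry a → IsCobdry b → IsCobdry (a + b)
  | 0, a, b, ha, hb => by
      show a + b = 0
      rw [show a = 0 from ha, show b = 0 from hb, add_zero]
  | n + 1, a, b, ⟨φ, h1, h2, h3⟩, ⟨ψ, g1, g2, g3⟩ =>
      ⟨φ + ψ, h1.add g1, h2.add g2, by rw [map_add, h3, g3]⟩

lemma IsCobdry.smul : ∀ {n : ℕ} (c : ℝ) {a : Cochain G n}, IsCobdry a → IsCobdry (c • a)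
  | 0, c, a, ha => by
      show c • a = 0
      rw [show a = 0 from ha, smul_zero]
  | n + 1, c, a, ⟨φ, h1, h2, h3⟩ => ⟨c • φ, h1.smul c, h2.smul c, by rw [map_smul, h3]⟩

lemma IsCobdry.zero : ∀ {n : ℕ}, IsCobdry (0 : Cochain G n)
  | 0 => rfl
  | n + 1 => ⟨0, IsBoundedC.zero, IsInvariant.zero, map_zero _⟩

variable (G)

/-- The coboundaries, as a submodule of the cocycles. -/
noncomputable def Bb (n : ℕ) : Submodule ℝ (Zb G n) where
  carrier := {z | IsCobdry (z : Cochain G n)}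
  add_mem' := by
    intro a b ha hb
    show IsCobdry ((a + b : Zb G n) : Cochain G n)
    rw [Submodule.coe_add]
    exact ha.add hb
  zero_mem' := by
    show IsCobdry ((0 : Zb G n) : Cochain G n)
    rw [ZeroMemClass.coe_zero]
    exact IsCobdry.zero
  smul_mem' := by
    intro c a ha
    show IsCobdry ((c • a : Zb G n) : Cochain G n)
    rw [Submodule.coe_smul]
    exact ha.smul c

/-- Bounded cohomology of `G` in degree `n` (with trivial real coefficients), computed from
the complex of bounded invariant homogeneous cochains. -/
abbrev Hb (n : ℕ) := Zb G n ⧸ Bb G n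

variable {G}

/-- The bounded cohomology class of a bounded invariant cocycle. -/
noncomputable abbrev mkH {n : ℕ} (z : Zb G n) : Hb G n := (Bb G n).mkQ z

lemma mkH_zero {n : ℕ} : mkH (0 : Zb G n) = 0 := map_zero (Bb G n).mkQ

lemma mkH_add {n : ℕ} (y z : Zb G n) : mkH (y + z) = mkH y + mkH z := map_add (Bb G n).mkQ y z

lemma mkH_smul {n : ℕ} (c : ℝ) (z : Zb G n) : mkH (c • z) = c • mkH z :=
  map_smul (Bb G n).mkQ c z

/-- The Gromov seminorm (canonical `ℓ^∞`-seminorm) on bounded cohomology, in `[0,∞]`. -/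
noncomputable def gnorm {n : ℕ} (α : Hb G n) : ℝ≥0∞ :=
  sInf {r | ∃ z : Zb G n, mkH z = α ∧ snorm (z : Cochain G n) = r}

lemma snorm_zero {n : ℕ} : snorm (0 : Cochain G n) = 0 :=
  le_antisymm (iSup_le fun x => by simp) (zero_le)

lemma snorm_add_le {n : ℕ} (φ ψ : Cochain G n) : snorm (φ + ψ) ≤ snorm φ + snorm ψ := by
  refine iSup_le fun x => ?_
  calc ENNReal.ofReal |(φ + ψ) x| ≤ ENNReal.ofReal (|φ x| + |ψ x|) :=
        ENNReal.ofReal_le_ofReal (abs_add_le (φ x) (ψ x))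
    _ = ENNReal.ofReal |φ x| + ENNReal.ofReal |ψ x| :=
        ENNReal.ofReal_add (abs_nonneg _) (abs_nonneg _)
    _ ≤ snorm φ + snorm ψ :=
        add_le_add (le_iSup (fun x => ENNReal.ofReal |φ x|) x)
          (le_iSup (fun x => ENNReal.ofReal |ψ x|) x)

lemma snorm_smul_le {n : ℕ} (c : ℝ) (φ : Cochain G n) :
    snorm (c • φ) ≤ ENNReal.ofReal |c| * snorm φ := by
  refine iSup_le fun x => ?_
  have h : |(c • φ) x| = |c| * |φ x| := by simp [abs_mul]
  rw [h, ENNReal.ofReal_mul (abs_nonneg c)]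
  exact mul_le_mul_right (le_iSup (fun x => ENNReal.ofReal |φ x|) x) _

lemma gnorm_le_snorm {n : ℕ} (z : Zb G n) : gnorm (mkH z) ≤ snorm (z : Cochain G n) :=
  sInf_le ⟨z, rfl, rfl⟩

lemma gnorm_zero {n : ℕ} : gnorm (0 : Hb G n) = 0 := by
  refine le_antisymm ?_ (zero_le)
  have h := gnorm_le_snorm (0 : Zb G n)
  rw [mkH_zero] at h
  simpa [snorm_zero] using h

lemma exists_gnorm_rep {n : ℕ} {α : Hb G n} (h : gnorm α = 0) {ε : ℝ≥0∞} (hε : 0 < ε) :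
    ∃ z : Zb G n, mkH z = α ∧ snorm (z : Cochain G n) < ε := by
  have h2 : gnorm α < ε := by rw [h]; exact hε
  rw [gnorm] at h2
  obtain ⟨r, ⟨z, hz, hr⟩, hlt⟩ := sInf_lt_iff.mp h2
  exact ⟨z, hz, hr ▸ hlt⟩

variable (G)

/-- The subspace of classes with vanishing Gromov seminorm. -/
noncomputable def NG (n : ℕ) : Submodule ℝ (Hb G n) where
  carrier := {α | gnorm α = 0}
  zero_mem' := gnorm_zero
  add_mem' := by
    intro a b ha hb
    show gnorm (a + b) = 0
    refine le_antisymm ?_ (zero_le)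
    refine ENNReal.le_of_forall_pos_le_add fun ε hε _ => ?_
    have hε2 : (0 : ℝ≥0∞) < (ε : ℝ≥0∞) / 2 :=
      ENNReal.half_pos (by exact_mod_cast hε.ne')
    obtain ⟨z₁, h₁, s₁⟩ := exists_gnorm_rep ha hε2
    obtain ⟨z₂, h₂, s₂⟩ := exists_gnorm_rep hb hε2
    have hmk : mkH (z₁ + z₂) = a + b := by rw [mkH_add, h₁, h₂]
    calc gnorm (a + b) ≤ snorm ((z₁ + z₂ : Zb G n) : Cochain G n) := hmk ▸ gnorm_le_snorm _
      _ = snorm ((z₁ : Cochain G n) + (z₂ : Cochain G n)) := by rw [Submodule.coe_add]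
      _ ≤ snorm (z₁ : Cochain G n) + snorm (z₂ : Cochain G n) := snorm_add_le _ _
      _ ≤ (ε : ℝ≥0∞) / 2 + (ε : ℝ≥0∞) / 2 := add_le_add s₁.le s₂.le
      _ = (ε : ℝ≥0∞) := ENNReal.add_halves _
      _ ≤ 0 + ε := by rw [zero_add]
  smul_mem' := by
    intro c a ha
    show gnorm (c • a) = 0
    by_cases hc : c = 0
    · subst hc
      rw [zero_smul]
      exact gnorm_zero
    refine le_antisymm ?_ (zero_le)
    refine ENNReal.le_of_forall_pos_le_add fun ε hε _ => ?_
    have hM0 : ENNReal.ofReal |c| ≠ 0 := by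
      rw [Ne, ENNReal.ofReal_eq_zero, not_le]
      exact abs_pos.mpr hc
    have hMt : ENNReal.ofReal |c| ≠ ⊤ := ENNReal.ofReal_ne_top
    have hδ : (0 : ℝ≥0∞) < (ε : ℝ≥0∞) / ENNReal.ofReal |c| :=
      ENNReal.div_pos (by exact_mod_cast hε.ne') hMt
    obtain ⟨z, hz, hs⟩ := exists_gnorm_rep ha hδ
    have hmk : mkH (c • z) = c • a := by rw [mkH_smul, hz]
    calc gnorm (c • a) ≤ snorm ((c • z : Zb G n) : Cochain G n) := hmk ▸ gnorm_le_snorm _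
      _ = snorm (c • (z : Cochain G n)) := by rw [Submodule.coe_smul]
      _ ≤ ENNReal.ofReal |c| * snorm (z : Cochain G n) := snorm_smul_le c _
      _ ≤ ENNReal.ofReal |c| * ((ε : ℝ≥0∞) / ENNReal.ofReal |c|) := mul_le_mul_right hs.le _
      _ = (ε : ℝ≥0∞) := ENNReal.mul_div_cancel hM0 hMt
      _ ≤ 0 + ε := by rw [zero_add]

variable {G}

/-- Having an invariant (possibly unbounded) primitive (with the convention `C^{-1} = 0`). -/
def HasInvPrimitive : ∀ {n : ℕ}, Cochain G n → Prop
  | 0, ψ => ψ = 0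
  | n + 1, ψ => ∃ φ : Cochain G n, IsInvariant φ ∧ delta φ = ψ

/-- A bounded cohomology class is exact if it lies in the kernel of the comparison map, i.e. if
it is represented by the coboundary of an invariant (possibly unbounded) cochain. -/
def IsExact {n : ℕ} (α : Hb G n) : Prop :=
  ∃ z : Zb G n, mkH z = α ∧ HasInvPrimitive (z : Cochain G n)

/-- Values `‖δφ‖_∞` over invariant primitives `φ` of representatives of `α` vanishing on
`S^{n}` (with the convention `C^{-1} = 0` in degree `0`). -/
def bahSet : ∀ {n : ℕ}, Set G → Hb G n → Set ℝ≥0∞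
  | 0, _, α => {r | α = 0 ∧ r = 0}
  | n + 1, S, α =>
      {r | ∃ φ : Cochain G n, IsInvariant φ ∧
        (∀ x : Fin (n + 1) → G, (∀ i, x i ∈ S) → φ x = 0) ∧
        (∃ z : Zb G (n + 1), (z : Cochain G (n + 1)) = delta φ ∧ mkH z = α) ∧
        snorm (delta φ) = r}

/-- The seminorm `‖α‖_S`. -/
noncomputable def normS {n : ℕ} (S : Set G) (α : Hb G n) : ℝ≥0∞ :=
  sInf (bahSet S α)

/-- The seminorm `‖α‖_bah = sup_S ‖α‖_S`, the supremum running over all finite `S ⊆ G`. -/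
noncomputable def bah {n : ℕ} (α : Hb G n) : ℝ≥0∞ :=
  ⨆ S : Finset G, normS (S : Set G) α

lemma normS_le {n : ℕ} {S : Set G} {α : Hb G (n + 1)} {φ : Cochain G n}
    (h1 : IsInvariant φ) (h2 : ∀ x : Fin (n + 1) → G, (∀ i, x i ∈ S) → φ x = 0)
    (h3 : ∃ z : Zb G (n + 1), (z : Cochain G (n + 1)) = delta φ ∧ mkH z = α) :
    normS S α ≤ snorm (delta φ) :=
  sInf_le ⟨φ, h1, h2, h3, rfl⟩

lemma normS_le_bah {n : ℕ} (S : Finset G) (α : Hb G n) : normS (S : Set G) α ≤ bah α :=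
  le_iSup (fun S : Finset G => normS (S : Set G) α) S

lemma bah_zero : ∀ {n : ℕ}, bah (0 : Hb G n) = 0 := by
  intro n
  refine le_antisymm (iSup_le fun S => ?_) (zero_le)
  cases n with
  | zero =>
      refine le_trans (sInf_le ?_) le_rfl
      exact ⟨rfl, rfl⟩
  | succ n =>
      have h := normS_le (α := (0 : Hb G (n + 1))) (S := (S : Set G))
        (φ := (0 : Cochain G n)) IsInvariant.zero (fun x _ => rfl)
        ⟨0, by rw [ZeroMemClass.coe_zero, map_zero], map_zero _⟩
      rw [map_zero, snorm_zero] at h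
      exact h

lemma eq_zero_of_bah_zero₀ {α : Hb G 0} (h : bah α = 0) : α = 0 := by
  by_contra hα
  have hS : normS ((∅ : Finset G) : Set G) α = ⊤ := by
    rw [normS]
    rw [show bahSet ((∅ : Finset G) : Set G) α = ∅ from ?_, sInf_empty]
    ext r
    simp only [bahSet, Set.mem_setOf_eq, Set.mem_empty_iff_false, iff_false, not_and]
    intro h0
    exact absurd h0 hα
  have := normS_le_bah (∅ : Finset G) α
  rw [hS, h] at this
  exact absurd (top_le_iff.mp this).symm (by simp)

lemma normS_eq_zero_of_bah {n : ℕ} {α : Hb G n} (h : bah α = 0) (S : Finset G) :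
    normS (S : Set G) α = 0 :=
  le_antisymm (h ▸ normS_le_bah S α) (zero_le)

lemma exists_bah_rep {n : ℕ} {α : Hb G (n + 1)} (h : bah α = 0) (S : Finset G)
    {ε : ℝ≥0∞} (hε : 0 < ε) :
    ∃ φ : Cochain G n, IsInvariant φ ∧
      (∀ x : Fin (n + 1) → G, (∀ i, x i ∈ (S : Set G)) → φ x = 0) ∧
      (∃ z : Zb G (n + 1), (z : Cochain G (n + 1)) = delta φ ∧ mkH z = α) ∧
      snorm (delta φ) < ε := by
  have h2 : normS ((S : Set G)) α < ε := by
    rw [normS_eq_zero_of_bah h S]; exact hε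
  rw [normS] at h2
  obtain ⟨r, hr, hlt⟩ := sInf_lt_iff.mp h2
  obtain ⟨φ, h1, h2', h3, h4⟩ := hr
  exact ⟨φ, h1, h2', h3, h4 ▸ hlt⟩

variable (G)

/-- The subspace `N^n_0` of exact classes with vanishing `‖·‖_bah`-seminorm. -/
noncomputable def N0 (n : ℕ) : Submodule ℝ (Hb G n) where
  carrier := {α | bah α = 0}
  zero_mem' := bah_zero
  add_mem' := by
    intro a b ha hb
    show bah (a + b) = 0
    cases n with
    | zero =>
        rw [eq_zero_of_bah_zero₀ ha, eq_zero_of_bah_zero₀ hb, add_zero]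
        exact bah_zero
    | succ n =>
        refine le_antisymm (iSup_le fun S => ?_) (zero_le)
        refine ENNReal.le_of_forall_pos_le_add fun ε hε _ => ?_
        have hε2 : (0 : ℝ≥0∞) < (ε : ℝ≥0∞) / 2 :=
          ENNReal.half_pos (by exact_mod_cast hε.ne')
        obtain ⟨φ₁, i₁, v₁, ⟨z₁, hz₁, hm₁⟩, s₁⟩ := exists_bah_rep ha S hε2
        obtain ⟨φ₂, i₂, v₂, ⟨z₂, hz₂, hm₂⟩, s₂⟩ := exists_bah_rep hb S hε2
        have hsum : normS (S : Set G) (a + b) ≤ snorm (delta (φ₁ + φ₂)) := by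
          refine normS_le (i₁.add i₂) (fun x hx => ?_) ⟨z₁ + z₂, ?_, ?_⟩
          · simp only [Pi.add_apply, v₁ x hx, v₂ x hx, add_zero]
          · rw [Submodule.coe_add, hz₁, hz₂, map_add]
          · rw [mkH_add, hm₁, hm₂]
        refine hsum.trans ?_
        calc snorm (delta (φ₁ + φ₂)) = snorm (delta φ₁ + delta φ₂) := by rw [map_add]
          _ ≤ snorm (delta φ₁) + snorm (delta φ₂) := snorm_add_le _ _
          _ ≤ (ε : ℝ≥0∞) / 2 + (ε : ℝ≥0∞) / 2 := add_le_add s₁.le s₂.le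
          _ = (ε : ℝ≥0∞) := ENNReal.add_halves _
          _ ≤ 0 + ε := by rw [zero_add]
  smul_mem' := by
    intro c a ha
    show bah (c • a) = 0
    by_cases hc : c = 0
    · subst hc
      rw [zero_smul]
      exact bah_zero
    cases n with
    | zero =>
        rw [eq_zero_of_bah_zero₀ ha, smul_zero]
        exact bah_zero
    | succ n =>
        refine le_antisymm (iSup_le fun S => ?_) (zero_le)
        refine ENNReal.le_of_forall_pos_le_add fun ε hε _ => ?_
        have hM0 : ENNReal.ofReal |c| ≠ 0 := by
          rw [Ne, ENNReal.ofReal_eq_zero, not_le]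
          exact abs_pos.mpr hc
        have hMt : ENNReal.ofReal |c| ≠ ⊤ := ENNReal.ofReal_ne_top
        have hδ : (0 : ℝ≥0∞) < (ε : ℝ≥0∞) / ENNReal.ofReal |c| :=
          ENNReal.div_pos (by exact_mod_cast hε.ne') hMt
        obtain ⟨φ, hi, hv, ⟨z, hz, hm⟩, hs⟩ := exists_bah_rep ha S hδ
        have hle : normS (S : Set G) (c • a) ≤ snorm (delta (c • φ)) := by
          refine normS_le (hi.smul c) (fun x hx => ?_) ⟨c • z, ?_, ?_⟩
          · simp only [Pi.smul_apply, hv x hx, smul_zero]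
          · rw [Submodule.coe_smul, hz, map_smul]
          · rw [mkH_smul, hm]
        refine hle.trans ?_
        calc snorm (delta (c • φ)) = snorm (c • delta φ) := by rw [map_smul]
          _ ≤ ENNReal.ofReal |c| * snorm (delta φ) := snorm_smul_le c _
          _ ≤ ENNReal.ofReal |c| * ((ε : ℝ≥0∞) / ENNReal.ofReal |c|) :=
              mul_le_mul_right hs.le _
          _ = (ε : ℝ≥0∞) := ENNReal.mul_div_cancel hM0 hMt
          _ ≤ 0 + ε := by rw [zero_add]


end BddCoh

open BddCoh


section QM
variable {Γ : Type*} [Group Γ] {f : Γ → ℝ} {C : ℝ}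

lemma qm_pow (hf : ∀ a b, |f a + f b - f (a * b)| ≤ C) (g : Γ) (n : ℕ) :
    ∀ m : ℕ, |f (g ^ (m * n)) - m * f (g ^ n)| ≤ m * C + C := by
  intro m
  induction m with
  | zero =>
    have h1 := hf 1 1
    simp only [mul_one] at h1
    simpa using (by simpa using h1 : |f 1| ≤ C)
  | succ m ih =>
    have hkey := hf (g ^ (m * n)) (g ^ n)
    have hpow : g ^ (m * n) * g ^ n = g ^ ((m + 1) * n) := by
      rw [← pow_add]; ring_nf
    rw [hpow] at hkey
    have : |f (g ^ ((m+1) * n)) - (↑(m+1)) * f (g ^ n)| ≤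
        |f (g ^ (m*n)) + f (g^n) - f (g ^ ((m+1)*n))| + |f (g ^ (m*n)) - m * f (g^n)| := by
      rw [abs_sub_comm (f (g ^ (m*n)) + f (g^n))]
      push_cast
      have := abs_add_le (f (g ^ ((m+1)*n)) - (f (g ^ (m*n)) + f (g^n)))
        (f (g ^ (m*n)) - m * f (g^n))
      calc |f (g ^ ((m+1) * n)) - ((m:ℝ)+1) * f (g ^ n)|
          = |(f (g ^ ((m+1)*n)) - (f (g ^ (m*n)) + f (g^n))) + (f (g ^ (m*n)) - m * f (g^n))| := by ring_nf
        _ ≤ _ := this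
    calc |f (g ^ ((m+1) * n)) - (↑(m+1)) * f (g ^ n)| ≤ _ := this
      _ ≤ C + (m * C + C) := add_le_add hkey ih
      _ = (↑(m+1)) * C + C := by push_cast; ring

lemma qm_C_nonneg (hf : ∀ a b, |f a + f b - f (a * b)| ≤ C) : 0 ≤ C :=
  le_trans (abs_nonneg _) (hf 1 1)

lemma qm_pair (hf : ∀ a b, |f a + f b - f (a * b)| ≤ C) (g : Γ) {m n : ℕ}
    (hm : 1 ≤ m) (hn : 1 ≤ n) :
    |f (g ^ n) / n - f (g ^ m) / m| ≤ C / n + C / m + 2 * C / (n * m) := by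
  have h1 := qm_pow hf g n m
  have h2 := qm_pow hf g m n
  rw [mul_comm n m] at h2
  have hcross : |(m : ℝ) * f (g ^ n) - n * f (g ^ m)| ≤ m * C + n * C + 2 * C := by
    calc |(m : ℝ) * f (g ^ n) - n * f (g ^ m)|
        = |(f (g ^ (m*n)) - n * f (g ^ m)) - (f (g ^ (m*n)) - m * f (g ^ n))| := by ring_nf
      _ ≤ |f (g ^ (m*n)) - (n:ℝ) * f (g ^ m)| + |f (g ^ (m*n)) - (m:ℝ) * f (g ^ n)| :=
          abs_sub _ _
      _ ≤ (n * C + C) + (m * C + C) := add_le_add h2 h1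
      _ = m * C + n * C + 2 * C := by ring
  have hn0 : (0:ℝ) < n := by exact_mod_cast hn
  have hm0 : (0:ℝ) < m := by exact_mod_cast hm
  have heq : f (g ^ n) / n - f (g ^ m) / m = ((m:ℝ) * f (g ^ n) - n * f (g ^ m)) / (n * m) := by
    field_simp
  rw [heq, abs_div, abs_of_pos (by positivity : (0:ℝ) < (n:ℝ) * m)]
  rw [div_le_iff₀ (by positivity)]
  have : (C / n + C / m + 2 * C / (n * m)) * ((n:ℝ) * m) = m * C + n * C + 2 * C := by
    field_simp
  rw [this]; exact hcross

lemma qm_exists_lim (hf : ∀ a b, |f a + f b - f (a * b)| ≤ C) (g : Γ) :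
    ∃ L : ℝ, ∀ n : ℕ, 1 ≤ n → |f (g ^ n) - n * L| ≤ C := by
  have hC := qm_C_nonneg hf
  set u : ℕ → ℝ := fun n => f (g ^ (n + 1)) / (n + 1) with hu
  have hpair : ∀ m n : ℕ, |u n - u m| ≤ C / (n+1) + 3 * C / (m+1) := by
    intro m n
    have := qm_pair hf g (Nat.succ_le_succ (Nat.zero_le m)) (Nat.succ_le_succ (Nat.zero_le n))
    push_cast at this
    have hn1 : (1:ℝ) ≤ (n:ℝ) + 1 := by have := Nat.cast_nonneg (α := ℝ) n; linarith
    have hC := qm_C_nonneg hf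
    have h2 : 2 * C / (((n:ℝ)+1) * ((m:ℝ)+1)) ≤ 2 * C / ((m:ℝ)+1) := by
      apply div_le_div_of_nonneg_left (by linarith) (by positivity)
      nlinarith [Nat.cast_nonneg (α := ℝ) n, Nat.cast_nonneg (α := ℝ) m]
    calc |u n - u m| ≤ C / (n+1) + C / (m+1) + 2 * C / (((n:ℝ)+1) * ((m:ℝ)+1)) := by
          simpa [hu] using this
      _ ≤ C / (n+1) + C / (m+1) + 2 * C / ((m:ℝ)+1) := by linarith
      _ = C / (n+1) + 3 * C / (m+1) := by ring
  have hcauchy : CauchySeq u := by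
    rw [Metric.cauchySeq_iff']
    intro ε hε
    obtain ⟨N, hN⟩ := exists_nat_gt (4 * C / ε)
    refine ⟨N, fun n hn => ?_⟩
    rw [Real.dist_eq]
    have h1 : |u n - u N| ≤ C / (n+1) + 3 * C / (N+1) := hpair N n
    have hNn : C / ((n:ℝ)+1) ≤ C / ((N:ℝ)+1) := by
      apply div_le_div_of_nonneg_left hC (by positivity)
      push_cast; linarith [(Nat.cast_le.mpr hn : (N:ℝ) ≤ n)]
    have : |u n - u N| ≤ 4 * C / ((N:ℝ)+1) := by
      calc |u n - u N| ≤ C / (n+1) + 3 * C / (N+1) := h1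
        _ ≤ C / (N+1) + 3 * C / (N+1) := by linarith
        _ = 4 * C / (N+1) := by ring
    refine lt_of_le_of_lt this ?_
    rw [div_lt_iff₀ (by positivity)]
    have hN' : 4 * C / ε < (N:ℝ) + 1 := lt_of_lt_of_le hN (by linarith)
    calc 4 * C = (4 * C / ε) * ε := by field_simp
      _ < ((N:ℝ)+1) * ε := by
          apply mul_lt_mul_of_pos_right hN' hε
      _ = ε * ((N:ℝ)+1) := by ring
  obtain ⟨L, hL⟩ := cauchySeq_tendsto_of_complete hcauchy
  refine ⟨L, fun n hn => ?_⟩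
  have hn0 : (0:ℝ) < n := by exact_mod_cast hn
  -- |f(g^n)/n - L| ≤ C/n by limit
  have hA : Filter.Tendsto (fun m : ℕ => |f (g ^ n) / n - u m|) Filter.atTop
      (nhds |f (g ^ n) / n - L|) := by
    exact ((continuous_abs.tendsto _).comp ((tendsto_const_nhds.sub hL))).congr (fun m => rfl)
  have hB : Filter.Tendsto (fun m : ℕ => C / (n:ℝ) + 3 * C * (1 / ((m:ℝ)+1))) Filter.atTop
      (nhds (C / (n:ℝ))) := by
    have := tendsto_one_div_add_atTop_nhds_zero_nat.const_mul (3 * C)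
    simpa using tendsto_const_nhds.add this
  have hle : ∀ m : ℕ, |f (g ^ n) / n - u m| ≤ C / (n:ℝ) + 3 * C * (1 / ((m:ℝ)+1)) := by
    intro m
    have := qm_pair hf g (Nat.succ_le_succ (Nat.zero_le m)) hn
    push_cast at this
    have hn1 : (1:ℝ) ≤ (n:ℝ) := by exact_mod_cast hn
    have h2 : 2 * C / ((n:ℝ) * ((m:ℝ)+1)) ≤ 2 * C / ((m:ℝ)+1) := by
      apply div_le_div_of_nonneg_left (by linarith) (by positivity)
      nlinarith [Nat.cast_nonneg (α := ℝ) m]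
    have h3 : C / ((m:ℝ)+1) + 2 * C / ((m:ℝ)+1) = 3 * C * (1 / ((m:ℝ)+1)) := by ring
    calc |f (g ^ n) / n - u m| ≤ C / (n:ℝ) + C / ((m:ℝ)+1) + 2 * C / ((n:ℝ) * ((m:ℝ)+1)) := by
          simpa [hu] using this
      _ ≤ C / (n:ℝ) + C / ((m:ℝ)+1) + 2 * C / ((m:ℝ)+1) := by linarith
      _ = C / (n:ℝ) + 3 * C * (1 / ((m:ℝ)+1)) := by linarith
  have hfin : |f (g ^ n) / n - L| ≤ C / (n:ℝ) := le_of_tendsto_of_tendsto' hA hB hle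
  have key : |f (g ^ n) - n * L| = (n:ℝ) * |f (g ^ n) / n - L| := by
    rw [show f (g ^ n) - (n:ℝ) * L = (n:ℝ) * (f (g ^ n) / n - L) by field_simp, abs_mul,
      abs_of_pos hn0]
  rw [key]
  calc (n:ℝ) * |f (g ^ n) / n - L| ≤ (n:ℝ) * (C / n) :=
        mul_le_mul_of_nonneg_left hfin hn0.le
    _ = C := by field_simp

end QM

section Glue
variable {Γ : Type*} [Group Γ]

/-- The function `g ↦ φ(1, g)` associated with a 1-cochain. -/
noncomputable def fOf (φ : Cochain Γ 1) : Γ → ℝ := fun g => φ ![1, g]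

lemma vec2_eq (x : Fin 2 → Γ) : x = ![x 0, x 1] := by
  funext i; fin_cases i <;> rfl

lemma vec3_eq (x : Fin 3 → Γ) : x = ![x 0, x 1, x 2] := by
  funext i; fin_cases i <;> rfl

lemma inv_eval {φ : Cochain Γ 1} (hφ : IsInvariant φ) (x y : Γ) :
    φ ![x, y] = fOf φ (x⁻¹ * y) := by
  have h := hφ x⁻¹ ![x, y]
  have he : (fun i => x⁻¹ * (![x, y]) i) = ![1, x⁻¹ * y] := by
    funext i; fin_cases i <;> simp
  rw [he] at h
  exact h.symm

lemma delta1_apply (φ : Cochain Γ 1) (a b c : Γ) :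
    delta φ ![a, b, c] = φ ![b, c] - φ ![a, c] + φ ![a, b] := by
  show (∑ i : Fin 3, (-1:ℝ) ^ (i:ℕ) * φ (fun j => (![a,b,c]) (i.succAbove j))) = _
  rw [Fin.sum_univ_three]
  have h0 : (fun j => (![a,b,c]) ((0 : Fin 3).succAbove j)) = ![b, c] := by
    funext j; fin_cases j <;> rfl
  have h1 : (fun j => (![a,b,c]) ((1 : Fin 3).succAbove j)) = ![a, c] := by
    funext j; fin_cases j <;> rfl
  have h2 : (fun j => (![a,b,c]) ((2 : Fin 3).succAbove j)) = ![a, b] := by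
    funext j; fin_cases j <;> rfl
  rw [h0, h1, h2]
  norm_num
  ring

lemma qm_of_cochain {φ : Cochain Γ 1} (hφ : IsInvariant φ) {C : ℝ}
    (hb : ∀ x, |delta φ x| ≤ C) (a b : Γ) :
    |fOf φ a + fOf φ b - fOf φ (a * b)| ≤ C := by
  have h := hb ![1, a, a * b]
  rw [delta1_apply] at h
  rw [inv_eval hφ a (a * b), inv_eval hφ 1 (a*b), inv_eval hφ 1 a] at h
  simp only [inv_mul_cancel_left, one_mul, inv_one] at h
  calc |fOf φ a + fOf φ b - fOf φ (a*b)|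
      = |fOf φ b - fOf φ (a*b) + fOf φ a| := by ring_nf
    _ ≤ C := h

lemma hom_of_cochain {φ : Cochain Γ 1} (hφ : IsInvariant φ) (hz : delta φ = 0) (a b : Γ) :
    fOf φ (a * b) = fOf φ a + fOf φ b := by
  have hb : ∀ x, |delta φ x| ≤ 0 := fun x => by rw [hz]; simp
  have := qm_of_cochain hφ hb a b
  have h0 : fOf φ a + fOf φ b - fOf φ (a*b) = 0 := abs_nonpos_iff.mp this
  linarith

lemma eq_pb {φ : Cochain Γ 1} (hφ : IsInvariant φ) :
    φ = fun x => fOf φ ((x 0)⁻¹ * x 1) := by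
  funext x
  rw [vec2_eq x, ← inv_eval hφ]
  congr 1

lemma pb_invariant (F : Γ → ℝ) : IsInvariant (fun x => F ((x 0)⁻¹ * x 1) : Cochain Γ 1) := by
  intro g x
  simp [mul_assoc]

lemma delta_pb_zero {F : Γ → ℝ} (hF : ∀ a b, F (a * b) = F a + F b) :
    delta (fun x => F ((x 0)⁻¹ * x 1) : Cochain Γ 1) = 0 := by
  funext x
  rw [vec3_eq x, delta1_apply]
  simp only [Matrix.cons_val_zero, Matrix.cons_val_one, Matrix.head_cons,
    Matrix.cons_val_two, Matrix.tail_cons]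
  have : (x 0)⁻¹ * x 2 = ((x 0)⁻¹ * x 1) * ((x 1)⁻¹ * x 2) := by group
  rw [Pi.zero_apply]
  rw [this, hF ((x 0)⁻¹ * x 1) ((x 1)⁻¹ * x 2)]
  ring

end Glue

section Key
variable {Γ : Type*} [Group Γ]

lemma hom_pow {d : Γ → ℝ} (hd : ∀ a b, d (a * b) = d a + d b) (x : Γ) (k : ℕ) :
    d (x ^ k) = k * d x := by
  induction k with
  | zero =>
    have h1 := hd 1 1
    rw [one_mul] at h1
    have hd1 : d 1 = 0 := by linarith
    simp [hd1]
  | succ k ih =>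
    rw [pow_succ, hd, ih]
    push_cast; ring

lemma key_est {f f₂ b d : Γ → ℝ} {C K : ℝ}
    (hf₂ : ∀ a b', |f₂ a + f₂ b' - f₂ (a * b')| ≤ C)
    (hK : ∀ y, |b y| ≤ K)
    (hd : ∀ a b', d (a * b') = d a + d b')
    (hsplit : ∀ y, f y = f₂ y + b y + d y)
    {L : ℝ} {x : Γ} (hLx : ∀ n : ℕ, 1 ≤ n → |f (x ^ n) - n * L| ≤ C)
    {N : ℕ} (hN : 1 ≤ N) (hx : f₂ (x ^ N) = 0) :
    (N : ℝ) * |L - d x| ≤ C := by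
  have hC := qm_C_nonneg hf₂
  have hK0 : 0 ≤ K := le_trans (abs_nonneg _) (hK 1)
  have hmain : ∀ m : ℕ, 1 ≤ m → ((N : ℝ) * m) * |L - d x| ≤ m * C + 2 * C + K := by
    intro m hm
    have hNm1 : 1 ≤ N * m := by
      calc 1 = 1 * 1 := (one_mul 1).symm
        _ ≤ N * m := Nat.mul_le_mul hN hm
    have h1 : |f (x ^ (N * m)) - (↑(N * m)) * L| ≤ C := hLx (N * m) hNm1
    have h2 : |f₂ (x ^ (N * m))| ≤ m * C + C := by
      have hq := qm_pow hf₂ (x ^ N) 1 m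
      simp only [mul_one, pow_one] at hq
      rw [hx, mul_zero, sub_zero] at hq
      rw [pow_mul]
      exact hq
    have h3 : |b (x ^ (N * m))| ≤ K := hK _
    have h4 : f (x ^ (N * m)) = f₂ (x ^ (N * m)) + b (x ^ (N * m)) + (↑(N * m) : ℝ) * d x := by
      rw [hsplit, hom_pow hd]
    have habs : ((N : ℝ) * m) * |L - d x| =
        |(-(f (x ^ (N * m)) - (↑(N * m) : ℝ) * L)) + f₂ (x ^ (N * m)) + b (x ^ (N * m))| := by
      have hNm0 : (0 : ℝ) ≤ (N : ℝ) * m := by positivity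
      rw [← abs_of_nonneg hNm0, ← abs_mul]
      congr 1
      push_cast at h4 ⊢
      linarith [h4]
    calc ((N : ℝ) * m) * |L - d x|
        = |(-(f (x ^ (N * m)) - (↑(N * m) : ℝ) * L)) + f₂ (x ^ (N * m)) + b (x ^ (N * m))| := habs
      _ ≤ |(-(f (x ^ (N * m)) - (↑(N * m) : ℝ) * L))| + |f₂ (x ^ (N * m))| + |b (x ^ (N * m))| :=
          abs_add_three _ _ _
      _ = |f (x ^ (N * m)) - (↑(N * m) : ℝ) * L| + |f₂ (x ^ (N * m))| + |b (x ^ (N * m))| := by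
          rw [abs_neg]
      _ ≤ C + (m * C + C) + K := add_le_add (add_le_add h1 h2) h3
      _ = m * C + 2 * C + K := by ring
  by_contra hcon
  push_neg at hcon
  have hdiff : 0 < (N : ℝ) * |L - d x| - C := by linarith
  obtain ⟨m, hm⟩ := exists_nat_gt ((2 * C + K) / ((N : ℝ) * |L - d x| - C))
  have hm0 : (0 : ℝ) < m := lt_of_le_of_lt (by positivity) hm
  have hm1 : 1 ≤ m := by exact_mod_cast Nat.one_le_iff_ne_zero.2 (by
    intro h0; rw [h0] at hm0; simp at hm0)
  have hgt : 2 * C + K < (m : ℝ) * ((N : ℝ) * |L - d x| - C) := by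
    rw [div_lt_iff₀ hdiff] at hm
    linarith
  have h5 : (m : ℝ) * ((N : ℝ) * |L - d x|) ≤ m * C + 2 * C + K := by
    have := hmain m hm1
    linarith [show ((N : ℝ) * m) * |L - d x| = (m : ℝ) * ((N : ℝ) * |L - d x|) from by ring]
  have hexp : (m : ℝ) * ((N : ℝ) * |L - d x| - C)
      = (m : ℝ) * ((N : ℝ) * |L - d x|) - m * C := by ring
  linarith

end Key


/-- Every nonzero exact class in degree-2 bounded cohomology has infinite `‖·‖_bah`-seminorm. -/
theorem bah_eq_top_of_exact_ne_zero_deg_two (Γ : Type*) [Group Γ]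
    (α : Hb Γ 2) (hα : IsExact α) (hne : α ≠ 0) : bah α = ⊤ := by
  classical
  by_contra h
  have hBne : bah α + 1 ≠ ⊤ := ENNReal.add_ne_top.2 ⟨h, ENNReal.one_ne_top⟩
  set C : ℝ := (bah α + 1).toReal with hCdef
  have hofReal : ENNReal.ofReal C = bah α + 1 := ENNReal.ofReal_toReal hBne
  have hC0 : 0 ≤ C := ENNReal.toReal_nonneg
  have hrep : ∀ S : Finset Γ, ∃ φ : Cochain Γ 1, IsInvariant φ ∧
      (∀ x : Fin 2 → Γ, (∀ i, x i ∈ (S : Set Γ)) → φ x = 0) ∧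
      (∃ z : Zb Γ 2, (z : Cochain Γ 2) = delta φ ∧ mkH z = α) ∧
      (∀ x, |delta φ x| ≤ C) := by
    intro S
    have h2 : normS ((S : Set Γ)) α < bah α + 1 :=
      lt_of_le_of_lt (normS_le_bah S α) (ENNReal.lt_add_right h one_ne_zero)
    rw [normS] at h2
    obtain ⟨r, hr, hlt⟩ := sInf_lt_iff.mp h2
    obtain ⟨φ, h1, h2', h3, h4⟩ := hr
    refine ⟨φ, h1, h2', h3, fun x => ?_⟩
    have hlt' : snorm (delta φ) < bah α + 1 := by rw [h4]; exact hlt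
    have hx : ENNReal.ofReal |delta φ x| ≤ bah α + 1 :=
      le_trans (le_iSup (fun x => ENNReal.ofReal |delta φ x|) x) hlt'.le
    rw [← hofReal] at hx
    exact (ENNReal.ofReal_le_ofReal_iff hC0).mp hx
  obtain ⟨φ₀, hi₀, -, ⟨z₀, hz₀, hm₀⟩, hb₀⟩ := hrep ∅
  have hqm₀ := qm_of_cochain hi₀ hb₀
  choose L hL using fun g : Γ => qm_exists_lim hqm₀ g
  -- additivity of the homogenization `L`
  have hadd : ∀ g h' : Γ, L (g * h') = L g + L h' := by
    intro g h'
    have hbound : ∀ N : ℕ, 1 ≤ N → (N : ℝ) * |L (g * h') - L g - L h'| ≤ 3 * C := by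
      intro N hN
      obtain ⟨φS, hiS, hvS, ⟨zS, hzS, hmS⟩, hbS⟩ :=
        hrep ({1, g ^ N, h' ^ N, (g * h') ^ N} : Finset Γ)
      have he : mkH z₀ = mkH zS := by rw [hm₀, hmS]
      have hmem : z₀ - zS ∈ Bb Γ 2 := (Submodule.Quotient.eq (Bb Γ 2)).mp he
      obtain ⟨ψ, hψb, hψi, hψd⟩ :=
        (hmem : IsCobdry ((z₀ - zS : Zb Γ 2) : Cochain Γ 2))
      have hψd' : delta ψ = delta φ₀ - delta φS := by
        rw [hψd, AddSubgroupClass.coe_sub, hz₀, hzS]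
      have hχinv : IsInvariant (φ₀ - φS - ψ) := by
        intro g'' x
        simp only [Pi.sub_apply]
        rw [hi₀, hiS, hψi]
      have hχd : delta (φ₀ - φS - ψ) = 0 := by
        rw [map_sub, map_sub, hψd']
        abel
      have hdhom := hom_of_cochain hχinv hχd
      have hsplit : ∀ y : Γ, fOf φ₀ y = fOf φS y + fOf ψ y + fOf (φ₀ - φS - ψ) y := by
        intro y
        simp only [fOf, Pi.sub_apply]
        ring
      obtain ⟨K, hK⟩ := hψb
      have hK' : ∀ y : Γ, |fOf ψ y| ≤ K := fun y => hK _
      have hqmS := qm_of_cochain hiS hbS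
      have hvan : ∀ x : Γ, x ∈ ({1, g ^ N, h' ^ N, (g * h') ^ N} : Finset Γ) →
          fOf φS x = 0 := by
        intro x hx
        apply hvS
        intro i
        fin_cases i <;> simp only [Matrix.cons_val_zero, Matrix.cons_val_one, Matrix.head_cons,
          Finset.coe_insert, Set.mem_insert_iff, Finset.coe_singleton, Set.mem_singleton_iff]
        · left; rfl
        · simp only [Finset.mem_insert, Finset.mem_singleton] at hx
          tauto
      have e1 := key_est hqmS hK' hdhom hsplit (hL g) hN (hvan (g ^ N) (by simp))
      have e2 := key_est hqmS hK' hdhom hsplit (hL h') hN (hvan (h' ^ N) (by simp))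
      have e3 := key_est hqmS hK' hdhom hsplit (hL (g * h')) hN (hvan ((g * h') ^ N) (by simp))
      have hd3 := hdhom g h'
      have habs : |L (g * h') - L g - L h'| ≤
          |L (g * h') - fOf (φ₀ - φS - ψ) (g * h')| + |L g - fOf (φ₀ - φS - ψ) g| +
            |L h' - fOf (φ₀ - φS - ψ) h'| := by
        calc |L (g * h') - L g - L h'|
            = |(L (g * h') - fOf (φ₀ - φS - ψ) (g * h')) + (-(L g - fOf (φ₀ - φS - ψ) g)) +
                (-(L h' - fOf (φ₀ - φS - ψ) h'))| := by rw [hd3]; ring_nf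
          _ ≤ _ := by
              refine (abs_add_three _ _ _).trans ?_
              rw [abs_neg, abs_neg]
      have hmul := mul_le_mul_of_nonneg_left habs (Nat.cast_nonneg (α := ℝ) N)
      nlinarith [e1, e2, e3]
    by_contra hne'
    have hpos : 0 < |L (g * h') - L g - L h'| := by
      rw [abs_pos]
      intro h0
      exact hne' (by linarith)
    obtain ⟨N, hNgt⟩ := exists_nat_gt (3 * C / |L (g * h') - L g - L h'|)
    have hN0 : (0 : ℝ) < N := lt_of_le_of_lt (by positivity) hNgt
    have hN1 : 1 ≤ N := by exact_mod_cast Nat.one_le_iff_ne_zero.2 (by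
      intro h0; rw [h0] at hN0; simp at hN0)
    have hb := hbound N hN1
    rw [div_lt_iff₀ hpos] at hNgt
    linarith
  -- build the bounded invariant primitive
  have hfL : ∀ y : Γ, |fOf φ₀ y - L y| ≤ C := by
    intro y
    have := hL y 1 le_rfl
    simpa using this
  have hLcochain : delta (fun x => L ((x 0)⁻¹ * x 1) : Cochain Γ 1) = 0 := delta_pb_zero hadd
  have hφ₀pb : φ₀ = fun x => fOf φ₀ ((x 0)⁻¹ * x 1) := eq_pb hi₀
  have hsub : (fun x => fOf φ₀ ((x 0)⁻¹ * x 1) - L ((x 0)⁻¹ * x 1) : Cochain Γ 1)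
      = φ₀ - (fun x => L ((x 0)⁻¹ * x 1)) := by
    funext x
    simp only [Pi.sub_apply]
    rw [← congrFun hφ₀pb x]
  have hδΨ : delta (fun x => fOf φ₀ ((x 0)⁻¹ * x 1) - L ((x 0)⁻¹ * x 1) : Cochain Γ 1)
      = delta φ₀ := by
    rw [hsub, map_sub, hLcochain, sub_zero]
  have hΨinv : IsInvariant
      (fun x => fOf φ₀ ((x 0)⁻¹ * x 1) - L ((x 0)⁻¹ * x 1) : Cochain Γ 1) := by
    intro g x
    have hgr : (g * x 0)⁻¹ * (g * x 1) = (x 0)⁻¹ * x 1 := by group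
    show fOf φ₀ ((g * x 0)⁻¹ * (g * x 1)) - L ((g * x 0)⁻¹ * (g * x 1)) = _
    rw [hgr]
  have hz₀mem : z₀ ∈ Bb Γ 2 := by
    show IsCobdry ((z₀ : Zb Γ 2) : Cochain Γ 2)
    exact ⟨_, ⟨C, fun x => hfL _⟩, hΨinv, by rw [hδΨ, ← hz₀]⟩
  have hα0 : α = 0 := by
    rw [← hm₀]
    exact (Submodule.Quotient.mk_eq_zero (Bb Γ 2)).2 hz₀mem
  exact hne hα0
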